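/- Let M and A be monoids, θ: M → Aut(A) an action, and φ: M → A a bijective 1-cocycle with respect to θ (i.e., φ is bijective, φ(1)=1, and φ(xy) = φ(x)·θ(x)(φ(y)) for all x,y ∈ M). If η is a congruence on M such that (1) η ⊆ Ker θ = {(x,y): θ(x)=θ(y)} and (2) φ(η) = {(θ(z)(φ(x)), θ(z)(φ(y))) : (x,y) ∈ η} for all z ∈ M, then φ(η) = {(φ(x),φ(y)) : (x,y) ∈ η} is a congruence on A. -/
import Mathlib


theorem stmt5 {M A : Type*} [Monoid M] [Monoid A]
    (θ : M →* MulAut A) (φ : M → A)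
    (hφbij : Function.Bijective φ) (hφ1 : φ 1 = 1)
    (hcoc : ∀ x y : M, φ (x * y) = φ x * θ x (φ y))
    (η : Con M)
    (hker : ∀ x y : M, η x y → θ x = θ y)
    (hinv : ∀ z a b, (∃ x y : M, η x y ∧ a = φ x ∧ b = φ y) ↔
      (∃ x y : M, η x y ∧ a = θ z (φ x) ∧ b = θ z (φ y))) :
    ∃ c : Con A, ∀ a b : A, c a b ↔ ∃ x y : M, η x y ∧ a = φ x ∧ b = φ y := by
  refine ⟨⟨⟨fun a b => ∃ x y : M, η x y ∧ a = φ x ∧ b = φ y, ?_, ?_, ?_⟩, ?_⟩,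
    fun a b => Iff.rfl⟩
  · intro a
    obtain ⟨x, rfl⟩ := hφbij.2 a
    exact ⟨x, x, η.refl x, rfl, rfl⟩
  · rintro a b ⟨x, y, h, rfl, rfl⟩
    exact ⟨y, x, η.symm h, rfl, rfl⟩
  · rintro a b c ⟨x, y, h1, rfl, rfl⟩ ⟨y', z, h2, hy, rfl⟩
    exact ⟨x, z, η.trans h1 (hφbij.1 hy ▸ h2), rfl, rfl⟩
  · rintro a b c d ⟨x, y, h1, rfl, rfl⟩ ⟨u, v, h2, rfl, rfl⟩
    obtain ⟨u', v', h3, hu, hv⟩ := (hinv x (φ u) (φ v)).1 ⟨u, v, h2, rfl, rfl⟩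
    refine ⟨x * u', y * v', η.mul h1 h3, ?_, ?_⟩
    · rw [hcoc, hu]
    · rw [hcoc, hv, hker x y h1]
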